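/- Let k ≥ 1 and define A ∈ R^{[4,2k]} by a_{iiii} = 1 for all i, a_{2i−1,2i−1,2i−1,2i} = −2 for i = 1,...,k, all other entries zero, and b = (0,1,0,1,...,0,1)^T. Then the nonnegative solutions of A x^3 = b are exactly the 2^k vectors x with (x_{2i−1}, x_{2i}) ∈ {(0,1),(2,1)} for each i; the minimal nonnegative solution is (0,1,...,0,1) and the maximal one is (2,1,...,2,1). -/

import Mathlib

open Finset Filter

noncomputable section

/-- Action of an order-(p+1) tensor (p trailing indices):
`(A x^{p})_i = ∑ a_{i i₂ … i_{p+1}} x_{i₂} ⋯ x_{i_{p+1}}`. -/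
def tapp (p n : ℕ) (A : Fin n → (Fin p → Fin n) → ℝ) (x : Fin n → ℝ) : Fin n → ℝ :=
  fun i => ∑ js : Fin p → Fin n, A i js * ∏ j, x (js j)

/-- A `Z`-tensor: all off-diagonal entries are nonpositive. -/
def IsZTensor (p n : ℕ) (A : Fin n → (Fin p → Fin n) → ℝ) : Prop :=
  ∀ i js, (∃ j, js j ≠ i) → A i js ≤ 0

/-- The identity tensor. -/
def identT (p n : ℕ) : Fin n → (Fin p → Fin n) → ℝ :=
  fun i js => if ∀ j, js j = i then 1 else 0

/-- Spectral radius of a tensor: sup of moduli of (real) eigenvalues. -/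
def tensorSpecRad (p n : ℕ) (B : Fin n → (Fin p → Fin n) → ℝ) : ℝ :=
  sSup {r : ℝ | ∃ lam : ℝ, ∃ x : Fin n → ℝ, x ≠ 0 ∧
    (∀ i, tapp p n B x i = lam * x i ^ p) ∧ r = |lam|}

/-- A nonsingular M-tensor: `A = s I − B` with `B ≥ 0` and `s > ρ(B)`. -/
def IsMTensor (p n : ℕ) (A : Fin n → (Fin p → Fin n) → ℝ) : Prop :=
  ∃ s : ℝ, ∃ B : Fin n → (Fin p → Fin n) → ℝ,
    (∀ i js, 0 ≤ B i js) ∧ tensorSpecRad p n B < s ∧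
    ∀ i js, A i js = s * identT p n i js - B i js

/-- The diagonal-part tensor of `A`. -/
def diagT (p n : ℕ) (A : Fin n → (Fin p → Fin n) → ℝ) : Fin n → (Fin p → Fin n) → ℝ :=
  fun i js => if ∀ j, js j = i then A i (fun _ => i) else 0

/-- The majorization matrix of `A`: `M_{ij} = a_{i j … j}`. -/
def majMatrix (p n : ℕ) (A : Fin n → (Fin p → Fin n) → ℝ) : Matrix (Fin n) (Fin n) ℝ :=
  fun i j => A i (fun _ => j)

/-- The "mixed index" part `N = M_tensor − A`: zero on constant trailing tuples,
`−A` elsewhere. -/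
def NPart (p n : ℕ) (A : Fin n → (Fin p → Fin n) → ℝ) : Fin n → (Fin p → Fin n) → ℝ :=
  fun i js => if ∀ j' j'', js j' = js j'' then 0 else -A i js

/-- A nonsingular M-matrix: a Z-matrix with `M y > 0` for some `y > 0`. -/
def IsMMatrix (n : ℕ) (P : Matrix (Fin n) (Fin n) ℝ) : Prop :=
  (∀ i j, i ≠ j → P i j ≤ 0) ∧ ∃ y : Fin n → ℝ, (∀ i, 0 < y i) ∧ ∀ i, 0 < P.mulVec y i

/-- Spectral radius of a real matrix (via its complex spectrum). -/
def matSpecRad (n : ℕ) (J : Matrix (Fin n) (Fin n) ℝ) : ℝ :=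
  sSup {r : ℝ | ∃ μ ∈ spectrum ℂ (J.map (Complex.ofReal ·)), r = ‖μ‖}

/-- Irreducibility of a matrix. -/
def MatIrreducible (n : ℕ) (J : Matrix (Fin n) (Fin n) ℝ) : Prop :=
  ∀ S : Finset (Fin n), S.Nonempty → S ≠ Finset.univ → ∃ i ∈ S, ∃ j, j ∉ S ∧ J i j ≠ 0

/-- The tensor of Example 1.1 (0-indexed): `a_{iiii} = 1`, and for each even `i`
(paper index `2i-1`) the entry with trailing indices `(i, i, i+1)` equals `-2`. -/
def A8 (k : ℕ) : Fin (2*k) → (Fin 3 → Fin (2*k)) → ℝ := fun i js =>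
  (if ∀ j, js j = i then (1 : ℝ) else 0) +
  (if i.val % 2 = 0 ∧ js 0 = i ∧ js 1 = i ∧ (js 2).val = i.val + 1 then (-2 : ℝ) else 0)

lemma hlt {k : ℕ} (i : Fin (2*k)) (h : i.val % 2 = 0) : i.val + 1 < 2*k := by
  have := i.isLt; omega

lemma tapp_A8 (k : ℕ) (x : Fin (2*k) → ℝ) (i : Fin (2*k)) :
    tapp 3 (2*k) (A8 k) x i = x i ^ 3 +
      (if h : i.val % 2 = 0 then -2 * (x i ^ 2 * x ⟨i.val+1, hlt i h⟩) else 0) := by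
  unfold tapp A8
  rw [Finset.sum_congr rfl (fun js _ => add_mul (if ∀ j, js j = i then (1:ℝ) else 0) _ _),
    Finset.sum_add_distrib]
  congr 1
  · rw [Finset.sum_congr rfl (g := fun js => if js = (fun _ => i) then ∏ j, x (js j) else 0)]
    · rw [Finset.sum_ite_eq' Finset.univ (fun _ => i) (fun js => ∏ j, x (js j))]
      simp [Fin.prod_univ_three, pow_succ, pow_zero]
    · intro js _
      by_cases h : js = (fun _ => i)
      · simp [h, funext_iff]
      · rw [if_neg h, if_neg (by rw [← funext_iff]; exact h), zero_mul]
  · by_cases he : i.val % 2 = 0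
    · rw [dif_pos he]
      set c : Fin 3 → Fin (2*k) := ![i, i, ⟨i.val+1, hlt i he⟩] with hc
      rw [Finset.sum_congr rfl (g := fun js => if js = c then -2 * ∏ j, x (js j) else 0)]
      · rw [Finset.sum_ite_eq' Finset.univ c (fun js => -2 * ∏ j, x (js j))]
        simp [hc, Fin.prod_univ_three, pow_two]
      · intro js _
        by_cases h : js = c
        · subst h; simp [hc, he]
        · rw [if_neg h, if_neg, zero_mul]
          rintro ⟨-, h0, h1, h2⟩
          apply h
          funext j
          fin_cases j <;> simp [hc, h0, h1]
          exact Fin.ext h2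
    · rw [dif_neg he]
      rw [Finset.sum_eq_zero]
      intro js _
      rw [if_neg (by tauto), zero_mul]

lemma sol_iff (k : ℕ) (x : Fin (2*k) → ℝ) (hx : 0 ≤ x) :
    tapp 3 (2*k) (A8 k) x = (fun i => if i.val % 2 = 0 then 0 else 1) ↔
      ∀ i : Fin (2*k), (i.val % 2 = 1 → x i = 1) ∧
        (i.val % 2 = 0 → x i = 0 ∨ x i = 2) := by
  rw [funext_iff]
  constructor
  · intro h
    have hodd : ∀ i : Fin (2*k), i.val % 2 = 1 → x i = 1 := by
      intro i hi
      have heq := h i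
      rw [tapp_A8, dif_neg (by omega)] at heq
      rw [if_neg (by omega)] at heq
      have hxi : 0 ≤ x i := hx i
      nlinarith [heq, hxi, sq_nonneg (x i - 1), sq_nonneg (x i + 1), sq_nonneg (x i)]
    intro i
    refine ⟨hodd i, fun hi => ?_⟩
    have heq := h i
    rw [tapp_A8, dif_pos hi, if_pos hi] at heq
    have hs : x ⟨i.val+1, hlt i hi⟩ = 1 := hodd _ (by simp; omega)
    rw [hs] at heq
    have hfac : x i ^ 2 * (x i - 2) = 0 := by linear_combination heq
    rcases mul_eq_zero.mp hfac with h0 | h2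
    · left; exact pow_eq_zero_iff (by norm_num) |>.mp h0
    · right; linarith
  · intro h i
    rw [tapp_A8]
    by_cases hi : i.val % 2 = 0
    · rw [dif_pos hi, if_pos hi]
      have hs : x ⟨i.val+1, hlt i hi⟩ = 1 := (h _).1 (by simp; omega)
      rw [hs]
      rcases (h i).2 hi with h0 | h0 <;> rw [h0] <;> ring
    · rw [dif_neg hi, if_neg hi, (h i).1 (by omega)]; ring


/-- with `b = (0,1,…,0,1)`, the nonnegative solutions of `A8 x³ = b` are
exactly the `2^k` vectors with `(x_{2i-1}, x_{2i}) ∈ {(0,1),(2,1)}` for each pair;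
`(0,1,…,0,1)` is the minimal and `(2,1,…,2,1)` the maximal nonnegative solution. -/
theorem stmt8 (k : ℕ) (hk : 1 ≤ k) :
    (∀ x : Fin (2*k) → ℝ, 0 ≤ x →
      (tapp 3 (2*k) (A8 k) x = (fun i => if i.val % 2 = 0 then 0 else 1) ↔
        ∀ i : Fin (2*k), (i.val % 2 = 1 → x i = 1) ∧
          (i.val % 2 = 0 → x i = 0 ∨ x i = 2))) ∧
    (0 ≤ (fun i => if i.val % 2 = 0 then (0:ℝ) else 1 : Fin (2*k) → ℝ) ∧
      tapp 3 (2*k) (A8 k) (fun i => if i.val % 2 = 0 then 0 else 1) =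
        (fun i => if i.val % 2 = 0 then 0 else 1) ∧
      ∀ y : Fin (2*k) → ℝ, 0 ≤ y →
        tapp 3 (2*k) (A8 k) y = (fun i => if i.val % 2 = 0 then 0 else 1) →
        (fun i => if i.val % 2 = 0 then (0:ℝ) else 1 : Fin (2*k) → ℝ) ≤ y) ∧
    (0 ≤ (fun i => if i.val % 2 = 0 then (2:ℝ) else 1 : Fin (2*k) → ℝ) ∧
      tapp 3 (2*k) (A8 k) (fun i => if i.val % 2 = 0 then 2 else 1) =
        (fun i => if i.val % 2 = 0 then 0 else 1) ∧
      ∀ y : Fin (2*k) → ℝ, 0 ≤ y →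
        tapp 3 (2*k) (A8 k) y = (fun i => if i.val % 2 = 0 then 0 else 1) →
        y ≤ (fun i => if i.val % 2 = 0 then (2:ℝ) else 1 : Fin (2*k) → ℝ)) := by
  have hnn0 : (0:Fin (2*k) → ℝ) ≤ (fun i => if i.val % 2 = 0 then (0:ℝ) else 1) := by
    intro i; dsimp; split <;> norm_num
  have hnn2 : (0:Fin (2*k) → ℝ) ≤ (fun i => if i.val % 2 = 0 then (2:ℝ) else 1) := by
    intro i; dsimp; split <;> norm_num
  refine ⟨fun x hx => sol_iff k x hx, ⟨hnn0, ?_, ?_⟩, ⟨hnn2, ?_, ?_⟩⟩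
  · rw [sol_iff k _ hnn0]
    intro i
    constructor <;> intro hi <;> simp [hi] <;> omega
  · intro y hy hsol i
    have h := (sol_iff k y hy).mp hsol i
    dsimp
    by_cases hi : i.val % 2 = 0
    · rw [if_pos hi]; rcases h.2 hi with h0 | h0 <;> rw [h0] <;> norm_num
    · rw [if_neg hi, h.1 (by omega)]
  · rw [sol_iff k _ hnn2]
    intro i
    constructor <;> intro hi <;> simp [hi] <;> omega
  · intro y hy hsol i
    have h := (sol_iff k y hy).mp hsol i
    dsimp
    by_cases hi : i.val % 2 = 0
    · rw [if_pos hi]; rcases h.2 hi with h0 | h0 <;> rw [h0] <;> norm_num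
    · rw [if_neg hi, h.1 (by omega)]


end
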